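/- Let 0 < σ ≤ 1/4 and 2σ < t < 1/4, and define the angles θ = arccos(−t/2), θ⁺ = arccos((−t² + 2σ + σ²)/(2t)), and θ⁻ = arccos((−t² − 2σ + σ²)/(2t)). Then θ⁺ < θ < θ⁻, with π/3 < θ⁺, π/2 < θ < 7π/12, θ⁻ < 3π/4, and moreover |θ⁺ + θ⁻ − 2θ| ≤ 5 σ²/t ≤ 3σ. -/

import Mathlib

open Real

open Set

-- helper: arccos x < y when cos y < x
private lemma arccos_lt_of_cos_lt {x y : ℝ} (hy0 : 0 ≤ y) (hyp : y ≤ π) (hx1 : x ≤ 1)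
    (h : Real.cos y < x) : arccos x < y := by
  by_contra hc
  push_neg at hc
  have hx0 : -1 ≤ x := le_trans (Real.neg_one_le_cos y) h.le
  have := Real.cos_le_cos_of_nonneg_of_le_pi hy0 (Real.arccos_le_pi x) hc
  rw [Real.cos_arccos hx0 hx1] at this
  linarith

private lemma lt_arccos_of_lt_cos {x y : ℝ} (hy0 : 0 ≤ y) (hyp : y ≤ π) (hx0 : -1 ≤ x)
    (h : x < Real.cos y) : y < arccos x := by
  by_contra hc
  push_neg at hc
  have hx1 : x ≤ 1 := le_trans h.le (Real.cos_le_one y)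
  have := Real.cos_le_cos_of_nonneg_of_le_pi (Real.arccos_nonneg x) hyp hc
  rw [Real.cos_arccos hx0 hx1] at this
  linarith


noncomputable def psi (x : ℝ) : ℝ := (Real.sqrt (1 - x^2))⁻¹
noncomputable def phi (x : ℝ) : ℝ := x / (Real.sqrt (1 - x^2))^3

private lemma sqrt_hasDeriv {x : ℝ} (hx : x^2 < 1) :
    HasDerivAt (fun y : ℝ => Real.sqrt (1 - y^2)) (-x / Real.sqrt (1 - x^2)) x := by
  have h0 : (0:ℝ) < 1 - x^2 := by linarith
  have hs : 0 < Real.sqrt (1 - x^2) := Real.sqrt_pos.mpr h0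
  have h1 : HasDerivAt (fun y : ℝ => 1 - y^2) (-(2*x)) x := by
    simpa using ((hasDerivAt_pow 2 x).const_sub 1)
  have h2 := (Real.hasDerivAt_sqrt (ne_of_gt h0)).comp x h1
  refine h2.congr_deriv (Eq.symm ?_)
  field_simp

private lemma psi_hasDeriv {x : ℝ} (hx : x^2 < 1) :
    HasDerivAt psi (phi x) x := by
  have h0 : (0:ℝ) < 1 - x^2 := by linarith
  have hs : 0 < Real.sqrt (1 - x^2) := Real.sqrt_pos.mpr h0
  have h3 := (sqrt_hasDeriv hx).inv (ne_of_gt hs)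
  refine h3.congr_deriv (Eq.symm ?_)
  unfold phi
  field_simp

private lemma phi_hasDeriv {x : ℝ} (hx : x^2 < 1) :
    HasDerivAt phi ((1 + 2*x^2) / (Real.sqrt (1 - x^2))^5) x := by
  have h0 : (0:ℝ) < 1 - x^2 := by linarith
  have hs : 0 < Real.sqrt (1 - x^2) := Real.sqrt_pos.mpr h0
  have hcube : HasDerivAt (fun y : ℝ => (Real.sqrt (1 - y^2))^3)
      (3 * (Real.sqrt (1 - x^2))^2 * (-x / Real.sqrt (1 - x^2))) x := by
    simpa using (sqrt_hasDeriv hx).fun_pow 3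
  have hdiv := (hasDerivAt_id x).div hcube (by positivity)
  have hsq : Real.sqrt (1 - x^2) ^ 2 = 1 - x^2 := Real.sq_sqrt h0.le
  refine hdiv.congr_deriv (Eq.symm ?_)
  simp only [id_eq]
  have e1 : 3 * Real.sqrt (1 - x^2)^2 * (-x / Real.sqrt (1 - x^2)) = -3*x*Real.sqrt (1 - x^2) := by
    field_simp
  rw [e1, div_eq_div_iff (by positivity) (by positivity)]
  linear_combination (-(Real.sqrt (1-x^2))^6) * hsq

private lemma memJ_sq {x : ℝ} (hx : x ∈ Icc (-(5:ℝ)/8) (5/8)) : x^2 ≤ 25/64 := by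
  obtain ⟨h1, h2⟩ := hx; nlinarith

private lemma sqrt_lb {x : ℝ} (hx : x ∈ Icc (-(5:ℝ)/8) (5/8)) :
    (78:ℝ)/100 ≤ Real.sqrt (1 - x^2) := by
  have h := memJ_sq hx
  rw [Real.le_sqrt (by norm_num) (by nlinarith)]
  nlinarith

-- arccos is (13/10)-Lipschitz on J
private lemma arccos_lip {x y : ℝ} (hx : x ∈ Icc (-(5:ℝ)/8) (5/8))
    (hy : y ∈ Icc (-(5:ℝ)/8) (5/8)) : |arccos y - arccos x| ≤ 13/10 * |y - x| := by
  have key := Convex.norm_image_sub_le_of_norm_hasDerivWithin_le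
    (f := arccos) (f' := fun z => -(1 / Real.sqrt (1 - z^2)))
    (s := Icc (-(5:ℝ)/8) (5/8)) (C := 13/10)
    (fun z hz => by
      have hz2 := memJ_sq hz
      exact (Real.hasDerivAt_arccos (by nlinarith) (by nlinarith)).hasDerivWithinAt)
    (fun z hz => by
      have hlb := sqrt_lb hz
      have hpos : (0:ℝ) < Real.sqrt (1 - z^2) := by linarith
      rw [Real.norm_eq_abs, abs_neg, abs_of_nonneg (by positivity)]
      rw [div_le_iff₀ hpos]
      nlinarith)
    (convex_Icc _ _) hx hy
  simpa [Real.norm_eq_abs] using key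

-- phi is 7-Lipschitz on J
private lemma phi_lip {x y : ℝ} (hx : x ∈ Icc (-(5:ℝ)/8) (5/8))
    (hy : y ∈ Icc (-(5:ℝ)/8) (5/8)) : |phi y - phi x| ≤ 7 * |y - x| := by
  have key := Convex.norm_image_sub_le_of_norm_hasDerivWithin_le
    (f := phi) (f' := fun z => (1 + 2*z^2) / (Real.sqrt (1 - z^2))^5)
    (s := Icc (-(5:ℝ)/8) (5/8)) (C := 7)
    (fun z hz => by
      have hz2 := memJ_sq hz
      exact (phi_hasDeriv (by nlinarith)).hasDerivWithinAt)
    (fun z hz => by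
      have hz2 := memJ_sq hz
      have hlb := sqrt_lb hz
      have hpos : (0:ℝ) < Real.sqrt (1 - z^2) := by linarith
      have hp5 : ((78:ℝ)/100)^5 ≤ (Real.sqrt (1 - z^2))^5 :=
        pow_le_pow_left₀ (by norm_num) hlb 5
      rw [Real.norm_eq_abs, abs_of_nonneg (by positivity)]
      rw [div_le_iff₀ (by positivity)]
      nlinarith)
    (convex_Icc _ _) hx hy
  simpa [Real.norm_eq_abs] using key

-- phi is odd
private lemma phi_odd (x : ℝ) : phi (-x) = -phi x := by
  unfold phi
  rw [show (-x)^2 = x^2 by ring]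
  ring

private lemma core (t c s0 dd : ℝ) (htpos : 0 < t) (ht : t < 1/4) (hc : c = -t/2)
    (hs0pos : 0 < s0) (hs0lt : s0 < 1/2) (hddpos : 0 < dd) (hddlt : dd < 1/16) :
    |arccos (c + (s0 + dd)) + arccos (c + (-s0 + dd)) - 2 * arccos c|
      ≤ 13/10 * dd + 13/10 * dd + 7*t/2 * s0^2 := by
  have hmemJ : ∀ u : ℝ, -s0 ≤ u → u ≤ s0 + dd → c + u ∈ Icc (-(5:ℝ)/8) (5/8) := by
    intro u h1 h2
    constructor <;> [nlinarith; nlinarith]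
  have hmemJ' : ∀ u : ℝ, 0 ≤ u → u ≤ s0 → u - c ∈ Icc (-(5:ℝ)/8) (5/8) := by
    intro u h1 h2
    constructor <;> [nlinarith; nlinarith]
  have hsqlt : ∀ x : ℝ, x ∈ Icc (-(5:ℝ)/8) (5/8) → x^2 < 1 := by
    intro x hx; have := memJ_sq hx; linarith
  -- the symmetric difference of psi
  have hG : ∀ u ∈ Icc (0:ℝ) s0, |psi (c+u) - psi (c-u)| ≤ 7*t*u := by
    intro u hu
    obtain ⟨hu0, hu1⟩ := hu
    have key := Convex.norm_image_sub_le_of_norm_hasDerivWithin_le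
      (f := fun u => psi (c+u) - psi (c-u))
      (f' := fun u => phi (c+u) + phi (c-u))
      (s := Icc (0:ℝ) s0) (C := 7*t)
      (fun v hv => by
        obtain ⟨hv0, hv1⟩ := hv
        have m1 : c + v ∈ Icc (-(5:ℝ)/8) (5/8) := hmemJ v (by linarith) (by linarith)
        have m2 : c - v ∈ Icc (-(5:ℝ)/8) (5/8) := hmemJ (-v) (by linarith) (by linarith)
        have d1 : HasDerivAt (fun u : ℝ => psi (c+u)) (phi (c+v) * 1) v :=
          (psi_hasDeriv (hsqlt _ m1)).comp v ((hasDerivAt_id v).const_add c)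
        have d2 : HasDerivAt (fun u : ℝ => psi (c-u)) (phi (c-v) * (-1)) v :=
          (psi_hasDeriv (hsqlt _ m2)).comp v ((hasDerivAt_id v).const_sub c)
        have := (d1.fun_sub d2).hasDerivWithinAt (s := Icc (0:ℝ) s0)
        refine this.congr_deriv (Eq.symm ?_)
        ring)
      (fun v hv => by
        obtain ⟨hv0, hv1⟩ := hv
        have m1 : c + v ∈ Icc (-(5:ℝ)/8) (5/8) := hmemJ v (by linarith) (by linarith)
        have m2 : v - c ∈ Icc (-(5:ℝ)/8) (5/8) := hmemJ' v hv0 hv1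
        have hodd : phi (c - v) = - phi (v - c) := by
          rw [show c - v = -(v - c) by ring, phi_odd]
        show ‖phi (c + v) + phi (c - v)‖ ≤ 7*t
        rw [Real.norm_eq_abs, hodd, ← sub_eq_add_neg]
        have := phi_lip m2 m1
        have harg : |(c+v) - (v-c)| = t := by
          rw [show (c+v) - (v-c) = 2*c by ring, hc]
          rw [show 2*(-t/2) = -t by ring, abs_neg, abs_of_pos htpos]
        rw [harg] at this
        linarith)
      (convex_Icc _ _) (Set.left_mem_Icc.mpr hs0pos.le) ⟨hu0, hu1⟩
    simp only [add_zero, sub_zero, sub_self, Real.norm_eq_abs] at key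
    rwa [abs_of_nonneg hu0] at key
  -- the second-order bound on F
  have hF : |(arccos (c+s0) + arccos (c-s0)) - 2 * arccos c| ≤ 7*t/2 * s0^2 := by
    have hderiv : ∀ u ∈ Icc (0:ℝ) s0,
        HasDerivAt (fun u : ℝ => arccos (c+u) + arccos (c-u))
          (-(psi (c+u) - psi (c-u))) u := by
      intro v hv
      obtain ⟨hv0, hv1⟩ := hv
      have m1 : c + v ∈ Icc (-(5:ℝ)/8) (5/8) := hmemJ v (by linarith) (by linarith)
      have m2 : c - v ∈ Icc (-(5:ℝ)/8) (5/8) := hmemJ (-v) (by linarith) (by linarith)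
      have q1 := hsqlt _ m1
      have q2 := hsqlt _ m2
      have d1 : HasDerivAt (fun u : ℝ => arccos (c+u)) (-(1 / Real.sqrt (1-(c+v)^2)) * 1) v :=
        (Real.hasDerivAt_arccos (by nlinarith) (by nlinarith)).comp v
          ((hasDerivAt_id v).const_add c)
      have d2 : HasDerivAt (fun u : ℝ => arccos (c-u)) (-(1 / Real.sqrt (1-(c-v)^2)) * (-1)) v :=
        (Real.hasDerivAt_arccos (by nlinarith) (by nlinarith)).comp v
          ((hasDerivAt_id v).const_sub c)
      have := d1.fun_add d2
      refine this.congr_deriv (Eq.symm ?_)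
      unfold psi
      rw [one_div, one_div]
      ring
    have hcont : ContinuousOn (fun u : ℝ => arccos (c+u) + arccos (c-u)) (Icc 0 s0) :=
      ((Real.continuous_arccos.comp (continuous_const.add continuous_id)).add
        (Real.continuous_arccos.comp (continuous_const.sub continuous_id))).continuousOn
    -- monotone direction
    have hmono : MonotoneOn (fun u : ℝ => arccos (c+u) + arccos (c-u) + 7*t/2*u^2)
        (Icc 0 s0) := by
      apply monotoneOn_of_deriv_nonneg (convex_Icc _ _)
      · exact hcont.add (Continuous.continuousOn (continuous_const.mul (continuous_pow 2)))
      · intro u hu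
        rw [interior_Icc] at hu
        have hD : HasDerivAt (fun u : ℝ => arccos (c+u) + arccos (c-u) + 7*t/2*u^2)
            (-(psi (c+u) - psi (c-u)) + 7*t/2*(2*u)) u := by
          have := (hderiv u ⟨hu.1.le, hu.2.le⟩).fun_add
            (((hasDerivAt_pow 2 u).const_mul (7*t/2)))
          simpa using this
        exact hD.differentiableAt.differentiableWithinAt
      · intro u hu
        rw [interior_Icc] at hu
        have hD : HasDerivAt (fun u : ℝ => arccos (c+u) + arccos (c-u) + 7*t/2*u^2)
            (-(psi (c+u) - psi (c-u)) + 7*t/2*(2*u)) u := by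
          have := (hderiv u ⟨hu.1.le, hu.2.le⟩).fun_add
            (((hasDerivAt_pow 2 u).const_mul (7*t/2)))
          simpa using this
        rw [hD.deriv]
        have := hG u ⟨hu.1.le, hu.2.le⟩
        have h1 : psi (c+u) - psi (c-u) ≤ 7*t*u := le_trans (le_abs_self _) this
        nlinarith
    have hanti : AntitoneOn (fun u : ℝ => arccos (c+u) + arccos (c-u) - 7*t/2*u^2)
        (Icc 0 s0) := by
      apply antitoneOn_of_deriv_nonpos (convex_Icc _ _)
      · exact hcont.sub (Continuous.continuousOn (continuous_const.mul (continuous_pow 2)))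
      · intro u hu
        rw [interior_Icc] at hu
        have hD : HasDerivAt (fun u : ℝ => arccos (c+u) + arccos (c-u) - 7*t/2*u^2)
            (-(psi (c+u) - psi (c-u)) - 7*t/2*(2*u)) u := by
          have := (hderiv u ⟨hu.1.le, hu.2.le⟩).fun_sub
            (((hasDerivAt_pow 2 u).const_mul (7*t/2)))
          simpa using this
        exact hD.differentiableAt.differentiableWithinAt
      · intro u hu
        rw [interior_Icc] at hu
        have hD : HasDerivAt (fun u : ℝ => arccos (c+u) + arccos (c-u) - 7*t/2*u^2)
            (-(psi (c+u) - psi (c-u)) - 7*t/2*(2*u)) u := by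
          have := (hderiv u ⟨hu.1.le, hu.2.le⟩).fun_sub
            (((hasDerivAt_pow 2 u).const_mul (7*t/2)))
          simpa using this
        rw [hD.deriv]
        have := hG u ⟨hu.1.le, hu.2.le⟩
        have h1 : -(7*t*u) ≤ psi (c+u) - psi (c-u) := by
          have := (abs_le.mp this).1; linarith
        nlinarith
    have h0mem : (0:ℝ) ∈ Icc (0:ℝ) s0 := Set.left_mem_Icc.mpr hs0pos.le
    have hsmem : s0 ∈ Icc (0:ℝ) s0 := Set.right_mem_Icc.mpr hs0pos.le
    have e1 := hmono h0mem hsmem hs0pos.le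
    have e2 := hanti h0mem hsmem hs0pos.le
    norm_num at e1 e2
    rw [abs_le]
    constructor <;> linarith
  have m1 : c + s0 ∈ Icc (-(5:ℝ)/8) (5/8) := hmemJ s0 (by linarith) (by linarith)
  have m2 : c + (s0 + dd) ∈ Icc (-(5:ℝ)/8) (5/8) := hmemJ _ (by linarith) (by linarith)
  have m3 : c - s0 ∈ Icc (-(5:ℝ)/8) (5/8) := hmemJ (-s0) (by linarith) (by linarith)
  have m4 : c + (-s0 + dd) ∈ Icc (-(5:ℝ)/8) (5/8) := hmemJ _ (by linarith) (by linarith)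
  have p1 := arccos_lip m1 m2
  have p2 := arccos_lip m3 m4
  have e3 : |(c + (s0 + dd)) - (c + s0)| = dd := by
    rw [show (c + (s0 + dd)) - (c + s0) = dd by ring, abs_of_pos hddpos]
  have e4 : |(c + (-s0 + dd)) - (c - s0)| = dd := by
    rw [show (c + (-s0 + dd)) - (c - s0) = dd by ring, abs_of_pos hddpos]
  rw [e3] at p1
  rw [e4] at p2
  have tri : arccos (c + (s0 + dd)) + arccos (c + (-s0 + dd)) - 2 * arccos c =
      (arccos (c + (s0 + dd)) - arccos (c + s0)) +
      (arccos (c + (-s0 + dd)) - arccos (c - s0)) +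
      ((arccos (c+s0) + arccos (c-s0)) - 2 * arccos c) := by ring
  rw [tri]
  calc |_| ≤ |arccos (c + (s0 + dd)) - arccos (c + s0)| +
      |arccos (c + (-s0 + dd)) - arccos (c - s0)| +
      |(arccos (c+s0) + arccos (c-s0)) - 2 * arccos c| := abs_add_three _ _ _
    _ ≤ 13/10 * dd + 13/10 * dd + 7*t/2 * s0^2 := by linarith

private lemma main_abs (σ t : ℝ) (hσ0 : 0 < σ) (hσ : σ ≤ 1/4)
    (ht0 : 2*σ < t) (ht : t < 1/4) :
    |arccos ((-t^2 + 2*σ + σ^2)/(2*t)) + arccos ((-t^2 - 2*σ + σ^2)/(2*t))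
      - 2 * arccos (-t/2)| ≤ 5 * σ^2 / t := by
  have htpos : 0 < t := by linarith
  have hs0pos : 0 < σ/t := by positivity
  have hs0lt : σ/t < 1/2 := by rw [div_lt_iff₀ htpos]; linarith
  have hddpos : 0 < σ^2/(2*t) := by positivity
  have hddlt : σ^2/(2*t) < 1/16 := by rw [div_lt_iff₀ (by positivity)]; nlinarith
  have key := core t (-t/2) (σ/t) (σ^2/(2*t)) htpos ht rfl hs0pos hs0lt hddpos hddlt
  have hX : (-t^2 + 2*σ + σ^2)/(2*t) = -t/2 + (σ/t + σ^2/(2*t)) := by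
    field_simp; ring
  have hY : (-t^2 - 2*σ + σ^2)/(2*t) = -t/2 + (-(σ/t) + σ^2/(2*t)) := by
    field_simp; ring
  rw [hX, hY]
  refine le_trans key ?_
  have heq : 13/10 * (σ^2/(2*t)) + 13/10 * (σ^2/(2*t)) + 7*t/2 * (σ/t)^2
      = 24/5 * σ^2 / t := by field_simp; ring
  rw [heq]
  rw [div_le_div_iff₀ htpos htpos]
  nlinarith [sq_nonneg σ, htpos]

/-- Let `0 < σ ≤ 1/4` and `2σ < t < 1/4`, and define the angles
`θ = arccos(−t/2)`, `θ⁺ = arccos((−t² + 2σ + σ²)/(2t))`, `θ⁻ = arccos((−t² − 2σ + σ²)/(2t))`.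
Then `θ⁺ < θ < θ⁻`, with `π/3 < θ⁺`, `π/2 < θ < 7π/12`, `θ⁻ < 3π/4`, and moreover
`|θ⁺ + θ⁻ − 2θ| ≤ 5σ²/t ≤ 3σ`. -/
theorem angle_estimates (σ t : ℝ) (hσ0 : 0 < σ) (hσ : σ ≤ 1 / 4)
    (ht0 : 2 * σ < t) (ht : t < 1 / 4) :
    arccos ((-t ^ 2 + 2 * σ + σ ^ 2) / (2 * t)) < arccos (-t / 2) ∧
    arccos (-t / 2) < arccos ((-t ^ 2 - 2 * σ + σ ^ 2) / (2 * t)) ∧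
    π / 3 < arccos ((-t ^ 2 + 2 * σ + σ ^ 2) / (2 * t)) ∧
    π / 2 < arccos (-t / 2) ∧
    arccos (-t / 2) < 7 * π / 12 ∧
    arccos ((-t ^ 2 - 2 * σ + σ ^ 2) / (2 * t)) < 3 * π / 4 ∧
    |arccos ((-t ^ 2 + 2 * σ + σ ^ 2) / (2 * t)) +
        arccos ((-t ^ 2 - 2 * σ + σ ^ 2) / (2 * t)) - 2 * arccos (-t / 2)|
      ≤ 5 * σ ^ 2 / t ∧
    5 * σ ^ 2 / t ≤ 3 * σ := by
  have htpos : 0 < t := by linarith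
  have hpi := Real.pi_pos
  -- bounds on the three cosine arguments
  have hc0 : (-1:ℝ) ≤ -t/2 := by linarith
  have hc1 : -t/2 ≤ (1:ℝ) := by linarith
  have hcp0 : (-1:ℝ) ≤ (-t^2 + 2*σ + σ^2)/(2*t) := by
    rw [le_div_iff₀ (by positivity)]; nlinarith
  have hcp1 : (-t^2 + 2*σ + σ^2)/(2*t) ≤ 1 := by
    rw [div_le_one (by positivity)]; nlinarith
  have hcm0 : (-1:ℝ) ≤ (-t^2 - 2*σ + σ^2)/(2*t) := by
    rw [le_div_iff₀ (by positivity)]; nlinarith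
  have hcm1 : (-t^2 - 2*σ + σ^2)/(2*t) ≤ 1 := by
    rw [div_le_one (by positivity)]; nlinarith
  have harc0 := Real.arccos_nonneg (-t/2)
  have harcπ := Real.arccos_le_pi (-t/2)
  refine ⟨?_, ?_, ?_, ?_, ?_, ?_, ?_, ?_⟩
  · -- θ⁺ < θ
    apply arccos_lt_of_cos_lt harc0 harcπ hcp1
    rw [Real.cos_arccos hc0 hc1]
    rw [lt_div_iff₀ (by positivity)]
    nlinarith
  · -- θ < θ⁻
    apply lt_arccos_of_lt_cos harc0 harcπ hcm0
    rw [Real.cos_arccos hc0 hc1]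
    rw [div_lt_iff₀ (by positivity)]
    nlinarith
  · -- π/3 < θ⁺
    apply lt_arccos_of_lt_cos (by positivity) (by linarith) hcp0
    rw [Real.cos_pi_div_three]
    rw [div_lt_iff₀ (by positivity)]
    nlinarith
  · -- π/2 < θ
    apply lt_arccos_of_lt_cos (by positivity) (by linarith) hc0
    rw [Real.cos_pi_div_two]
    linarith
  · -- θ < 7π/12
    apply arccos_lt_of_cos_lt (by positivity) (by linarith) hc1
    have h712 : (7:ℝ) * π / 12 = π/12 + π/2 := by ring
    rw [h712, Real.cos_add_pi_div_two]
    have hx0 : (0:ℝ) < π/12 := by positivity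
    have hx1 : π/12 ≤ 1 := by linarith [Real.pi_lt_d2]
    have hs := Real.sin_gt_sub_cube hx0
    have hgt := Real.pi_gt_d2
    have hlt := Real.pi_lt_d2
    have hx3 : (π/12)^3 ≤ (0.2625:ℝ)^3 := by
      apply pow_le_pow_left₀ (by positivity) (by linarith)
    have : (1:ℝ)/8 < Real.sin (π/12) := by nlinarith [hs, hx3, hgt]
    linarith
  · -- θ⁻ < 3π/4
    apply arccos_lt_of_cos_lt (by positivity) (by linarith) hcm1
    have h34 : (3:ℝ) * π / 4 = π - π/4 := by ring
    rw [h34, Real.cos_pi_sub, Real.cos_pi_div_four]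
    have h2 : (1.4:ℝ) < Real.sqrt 2 := by
      rw [show (1.4:ℝ) = Real.sqrt (1.96) by
        rw [show (1.96:ℝ) = 1.4^2 by norm_num, Real.sqrt_sq (by norm_num)]]
      exact Real.sqrt_lt_sqrt (by norm_num) (by norm_num)
    rw [lt_div_iff₀ (by positivity : (0:ℝ) < 2*t)]
    nlinarith [mul_lt_mul_of_pos_right h2 htpos]
  · -- main bound
    have := main_abs σ t hσ0 (by linarith) (by linarith) (by linarith)
    convert this using 4 <;> ring
  · -- 5σ²/t ≤ 3σ
    rw [div_le_iff₀ htpos]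
    nlinarith
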